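/- arXiv:2206.04978 — 3 statements merged into one kernel-verified Lean document; each statement's English description precedes it below -/
import Mathlib

section
/- Let g(λ) := h(|λ|) and gₙ(λ) := hₙ(|λ|) where h(x) := max{min{|x|,1}, |x|−1}, h₁(x) := x²/4, and hₙ := h + (1/n)(h₁ − h). Then gₙ → g pointwise on ℂ, while the sublevel sets satisfy sub₁(gₙ) = 2𝔻 for every n and sub₁(g) = 𝔻, so sub₁(gₙ) does not converge to sub₁(g) in Hausdorff distance. -/
open Filter Topology Metric

noncomputable def hEx3 (x : ℝ) : ℝ := max (min |x| 1) (|x| - 1)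
noncomputable def h1Ex3 (x : ℝ) : ℝ := x ^ 2 / 4
noncomputable def hnEx3 (n : ℕ) (x : ℝ) : ℝ := hEx3 x + (1 / n : ℝ) * (h1Ex3 x - hEx3 x)
noncomputable def gEx3 (z : ℂ) : ℝ := hEx3 ‖z‖
noncomputable def gnEx3 (n : ℕ) (z : ℂ) : ℝ := hnEx3 n ‖z‖

lemma hEx3_bounds (x : ℝ) (hx : 0 ≤ x) :
    (x < 2 → hEx3 x ≤ 1) ∧ (2 ≤ x → 1 ≤ hEx3 x) ∧ (x < 1 → hEx3 x < 1) ∧ (1 ≤ x → 1 ≤ hEx3 x) := by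
  unfold hEx3
  rw [abs_of_nonneg hx]
  rcases le_or_gt x 1 with h1 | h1
  · rw [min_eq_left h1, max_eq_left (by linarith)]
    refine ⟨fun _ => h1, fun h => by linarith, fun h => h, fun h => le_antisymm h1 h ▸ le_refl _⟩
  · rw [min_eq_right h1.le]
    rcases le_or_gt x 2 with h2 | h2
    · rw [max_eq_left (by linarith)]
      exact ⟨fun _ => le_refl _, fun h => le_refl _, fun h => absurd h (not_lt.2 h1.le), fun _ => le_refl _⟩
    · rw [max_eq_right (by linarith)]
      exact ⟨fun h => by linarith, fun h => by linarith, fun h => absurd h (not_lt.2 h1.le), fun _ => by linarith⟩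

lemma hn_lt_iff (n : ℕ) (hn : 1 ≤ n) (x : ℝ) (hx : 0 ≤ x) : hnEx3 n x < 1 ↔ x < 2 := by
  have hn0 : (0:ℝ) < 1 / n := by positivity
  have hn1 : (1:ℝ) / n ≤ 1 := by
    rw [div_le_one (by positivity)]
    exact_mod_cast hn
  obtain ⟨hb1, hb2, _, _⟩ := hEx3_bounds x hx
  unfold hnEx3 h1Ex3
  constructor
  · intro h
    by_contra hc
    push_neg at hc
    have h1 : 1 ≤ hEx3 x := hb2 hc
    have h2 : (1:ℝ) ≤ x ^ 2 / 4 := by nlinarith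
    nlinarith
  · intro h
    have h1 : hEx3 x ≤ 1 := hb1 h
    have h2 : x ^ 2 / 4 < 1 := by nlinarith
    nlinarith

lemma h_lt_iff (x : ℝ) (hx : 0 ≤ x) : hEx3 x < 1 ↔ x < 1 := by
  obtain ⟨_, _, hb3, hb4⟩ := hEx3_bounds x hx
  constructor
  · intro h
    by_contra hc
    push_neg at hc
    exact absurd h (not_lt.2 (hb4 hc))
  · exact hb3

/-- The "locally constant" example: `gₙ → g` pointwise, but the sublevel sets
`sub₁(gₙ) = 2𝔻` do not Hausdorff-converge to `sub₁(g) = 𝔻`. -/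
theorem locally_constant_example :
    (∀ z : ℂ, Tendsto (fun n => gnEx3 n z) atTop (𝓝 (gEx3 z))) ∧
    (∀ n : ℕ, 1 ≤ n → {z : ℂ | gnEx3 n z < 1} = ball (0 : ℂ) 2) ∧
    {z : ℂ | gEx3 z < 1} = ball (0 : ℂ) 1 ∧
    ¬ Tendsto (fun n => hausdorffDist {z : ℂ | gnEx3 n z < 1} {z : ℂ | gEx3 z < 1})
        atTop (𝓝 0) := by
  have hsub2 : ∀ n : ℕ, 1 ≤ n → {z : ℂ | gnEx3 n z < 1} = ball (0 : ℂ) 2 := by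
    intro n hn
    ext z
    simp only [Set.mem_setOf_eq, mem_ball, Complex.dist_eq, sub_zero]
    exact hn_lt_iff n hn _ (norm_nonneg z)
  have hsub1 : {z : ℂ | gEx3 z < 1} = ball (0 : ℂ) 1 := by
    ext z
    simp only [Set.mem_setOf_eq, mem_ball, Complex.dist_eq, sub_zero]
    exact h_lt_iff _ (norm_nonneg z)
  refine ⟨?_, hsub2, hsub1, ?_⟩
  · intro z
    have h0 : Tendsto (fun n : ℕ => (1 / n : ℝ) * (h1Ex3 ‖z‖ - hEx3 ‖z‖))
        atTop (𝓝 0) := by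
      simpa using tendsto_one_div_atTop_nhds_zero_nat.mul_const
        (h1Ex3 ‖z‖ - hEx3 ‖z‖)
    have := (tendsto_const_nhds : Tendsto (fun _ : ℕ => gEx3 z) atTop (𝓝 (gEx3 z))).add h0
    simpa [gnEx3, hnEx3, gEx3] using this
  · intro ht
    have hb : (1/2 : ℝ) ≤ hausdorffDist (ball (0:ℂ) 2) (ball (0:ℂ) 1) := by
      have hmem : (3/2 : ℂ) ∈ ball (0:ℂ) 2 := by
        simp only [mem_ball, Complex.dist_eq, sub_zero]
        rw [show ((3:ℂ)/2) = ((3/2 : ℝ) : ℂ) by push_cast; ring, Complex.norm_real, Real.norm_eq_abs]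
        rw [abs_of_nonneg (by norm_num)]; norm_num
      have hfin : EMetric.hausdorffEdist (ball (0:ℂ) 2) (ball (0:ℂ) 1) ≠ ⊤ :=
        hausdorffEdist_ne_top_of_nonempty_of_bounded
          (nonempty_ball.2 (by norm_num)) (nonempty_ball.2 (by norm_num))
          isBounded_ball isBounded_ball
      have h1 : (1/2:ℝ) ≤ infDist (3/2:ℂ) (ball (0:ℂ) 1) := by
        by_contra hc
        push_neg at hc
        obtain ⟨y, hy, hdy⟩ := (infDist_lt_iff (nonempty_ball.2 (by norm_num))).1 hc
        simp only [mem_ball, Complex.dist_eq, sub_zero] at hy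
        have h3 : dist (3/2 : ℂ) 0 ≤ dist (3/2 : ℂ) y + dist y 0 := dist_triangle _ _ _
        have h4 : dist (3/2 : ℂ) 0 = 3/2 := by
          simp only [Complex.dist_eq, sub_zero]
          rw [show ((3:ℂ)/2) = ((3/2 : ℝ) : ℂ) by push_cast; ring, Complex.norm_real, Real.norm_eq_abs]
          norm_num
        rw [h4] at h3
        have h5 : dist y 0 < 1 := by
          simpa [Complex.dist_eq] using hy
        linarith
      exact h1.trans (infDist_le_hausdorffDist_of_mem hmem hfin)
    obtain ⟨n, hlt, hn⟩ := ((ht.eventually (gt_mem_nhds (by norm_num : (0:ℝ) < 1/2))).and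
      (eventually_ge_atTop 1)).exists
    rw [hsub2 n hn, hsub1] at hlt
    exact absurd hlt (not_lt.2 hb)
end

section
/- Let hₙ : [0,∞) → [0,∞) be hₙ(x) = |sin(nπx)| for x ∈ [0,1] and hₙ(x) = x − 1 for x > 1, and gₙ(λ) := hₙ(|λ|). Then for every ε > 0 the sublevel sets sub_ε(gₙ) := {λ ∈ ℂ : gₙ(λ) < ε} converge in Hausdorff distance to the open disk (1+ε)𝔻, while the sequence of functions gₙ does not converge pointwise on ℂ (e.g. it fails to converge at points λ with irrational |λ| in (0,1)). -/
open Filter Topology Metric Real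

noncomputable def hnEx5 (n : ℕ) (x : ℝ) : ℝ :=
  if x ≤ 1 then |Real.sin (n * π * x)| else x - 1

noncomputable def gnEx5 (n : ℕ) (z : ℂ) : ℝ := hnEx5 n ‖z‖

/-- Key lemma for part 2: `|sin (n θ)|` never converges when `0 < θ < π`. -/
lemma no_lim_abs_sin (θ : ℝ) (hθ0 : 0 < θ) (hθπ : θ < π) (L : ℝ)
    (hL : Tendsto (fun n : ℕ => |Real.sin (n * θ)|) atTop (𝓝 L)) : False := by
  have hL0 : 0 ≤ L := ge_of_tendsto' hL fun n => abs_nonneg _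
  have hL1 : L ≤ 1 := le_of_tendsto' hL fun n => Real.abs_sin_le_one _
  set M : ℝ := Real.sqrt (1 - L ^ 2) with hM
  -- |cos (n θ)| → M
  have hcoseq : ∀ n : ℕ, |Real.cos (n * θ)| = Real.sqrt (1 - |Real.sin (n * θ)| ^ 2) := by
    intro n
    rw [sq_abs, ← Real.cos_sq', Real.sqrt_sq_eq_abs]
  have hcos : Tendsto (fun n : ℕ => |Real.cos (n * θ)|) atTop (𝓝 M) := by
    have h := ((tendsto_const_nhds (x := (1:ℝ))).sub (hL.pow 2)).sqrt
    simpa [hcoseq] using h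
  -- subsequence 2n
  have t2 : Tendsto (fun n : ℕ => 2 * n) atTop atTop :=
    tendsto_atTop_atTop_of_monotone (fun a b h => by omega) (fun b => ⟨b, by omega⟩)
  have h2 : Tendsto (fun n : ℕ => |Real.sin ((2 * n : ℕ) * θ)|) atTop (𝓝 L) := hL.comp t2
  have h2' : Tendsto (fun n : ℕ => |Real.sin ((2 * n : ℕ) * θ)|) atTop (𝓝 (2 * (L * M))) := by
    have heq : ∀ n : ℕ, |Real.sin ((2 * n : ℕ) * θ)|
        = 2 * (|Real.sin (n * θ)| * |Real.cos (n * θ)|) := by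
      intro n
      push_cast
      rw [mul_assoc, Real.sin_two_mul, abs_mul, abs_mul, abs_two, mul_assoc]
    simp only [heq]
    exact (hL.mul hcos).const_mul 2
  have key1 : L = 2 * (L * M) := tendsto_nhds_unique h2 h2'
  -- subsequence 3n
  have t3 : Tendsto (fun n : ℕ => 3 * n) atTop atTop :=
    tendsto_atTop_atTop_of_monotone (fun a b h => by omega) (fun b => ⟨b, by omega⟩)
  have h3 : Tendsto (fun n : ℕ => |Real.sin ((3 * n : ℕ) * θ)|) atTop (𝓝 L) := hL.comp t3
  have h3' : Tendsto (fun n : ℕ => |Real.sin ((3 * n : ℕ) * θ)|) atTop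
      (𝓝 (L * |3 - 4 * L ^ 2|)) := by
    have heq : ∀ n : ℕ, |Real.sin ((3 * n : ℕ) * θ)|
        = |Real.sin (n * θ)| * |3 - 4 * |Real.sin (n * θ)| ^ 2| := by
      intro n
      push_cast
      rw [mul_assoc, Real.sin_three_mul, sq_abs, ← abs_mul]
      ring_nf
    simp only [heq]
    exact hL.mul (tendsto_const_nhds.sub ((hL.pow 2).const_mul 4)).abs
  have key2 : L = L * |3 - 4 * L ^ 2| := tendsto_nhds_unique h3 h3'
  by_cases hLz : L = 0
  · -- L = 0 : contradiction using sin((n+1)θ)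
    subst hLz
    have hM1 : M = 1 := by simp [hM]
    have t1 : Tendsto (fun n : ℕ => n + 1) atTop atTop :=
      tendsto_atTop_atTop_of_monotone (fun a b h => by omega) (fun b => ⟨b, by omega⟩)
    have h4 : Tendsto (fun n : ℕ => |Real.sin ((n + 1 : ℕ) * θ)|) atTop (𝓝 0) := hL.comp t1
    have hlow : ∀ n : ℕ, |Real.cos (n * θ)| * Real.sin θ - |Real.sin (n * θ)| * |Real.cos θ|
        ≤ |Real.sin ((n + 1 : ℕ) * θ)| := by
      intro n
      have hexp : ((n + 1 : ℕ) : ℝ) * θ = n * θ + θ := by push_cast; ring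
      rw [hexp, Real.sin_add]
      have h := abs_sub_abs_le_abs_sub (Real.cos (n * θ) * Real.sin θ)
        (-(Real.sin (n * θ) * Real.cos θ))
      rw [abs_neg, sub_neg_eq_add] at h
      calc |Real.cos (n * θ)| * Real.sin θ - |Real.sin (n * θ)| * |Real.cos θ|
          ≤ |Real.cos (n * θ) * Real.sin θ| - |Real.sin (n * θ) * Real.cos θ| := by
            rw [abs_mul, abs_mul]
            have : |Real.sin θ| = Real.sin θ :=
              abs_of_nonneg (Real.sin_pos_of_pos_of_lt_pi hθ0 hθπ).le
            rw [this]
        _ ≤ |Real.cos (n * θ) * Real.sin θ + Real.sin (n * θ) * Real.cos θ| := h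
        _ = |Real.sin (n * θ) * Real.cos θ + Real.cos (n * θ) * Real.sin θ| := by
            rw [add_comm]
    have hlowlim : Tendsto
        (fun n : ℕ => |Real.cos (n * θ)| * Real.sin θ - |Real.sin (n * θ)| * |Real.cos θ|)
        atTop (𝓝 (Real.sin θ)) := by
      have h := (hcos.mul_const (Real.sin θ)).sub (hL.mul_const |Real.cos θ|)
      rw [hM1] at h
      simpa using h
    have : Real.sin θ ≤ 0 := le_of_tendsto_of_tendsto' hlowlim h4 hlow
    exact absurd (Real.sin_pos_of_pos_of_lt_pi hθ0 hθπ) (not_lt.mpr this)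
  · -- L ≠ 0
    have h2M : 2 * M = 1 := by
      have := mul_left_cancel₀ hLz (by linarith [key1] : L * 1 = L * (2 * M))
      linarith
    have hMsq : M ^ 2 = 1 - L ^ 2 := Real.sq_sqrt (by nlinarith)
    have hL2 : L ^ 2 = 3 / 4 := by nlinarith
    have : |3 - 4 * L ^ 2| = 0 := by rw [hL2]; norm_num
    rw [this, mul_zero] at key2
    exact hLz key2

/-- The "increasingly oscillating" example: for every `ε > 0` the sublevel sets
`sub_ε(gₙ)` Hausdorff-converge to the open disk `(1+ε)𝔻`, yet `gₙ` does not
converge pointwise (it fails at every point with irrational modulus in `(0,1)`). -/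
theorem oscillating_example :
    (∀ ε : ℝ, 0 < ε →
      Tendsto (fun n => hausdorffDist {z : ℂ | gnEx5 n z < ε} (ball (0 : ℂ) (1 + ε)))
        atTop (𝓝 0)) ∧
    (∀ z : ℂ, 0 < ‖z‖ → ‖z‖ < 1 → Irrational ‖z‖ →
      ¬ ∃ L : ℝ, Tendsto (fun n => gnEx5 n z) atTop (𝓝 L)) := by
  constructor
  · intro ε hε
    refine squeeze_zero' (Eventually.of_forall fun n => hausdorffDist_nonneg) ?_
      tendsto_one_div_atTop_nhds_zero_nat
    filter_upwards [eventually_ge_atTop 1] with n hn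
    have hn0 : (0 : ℝ) < n := by exact_mod_cast hn
    apply hausdorffDist_le_of_mem_dist (by positivity)
    · -- sublevel set ⊆ ball
      intro x hx
      refine ⟨x, ?_, by simp⟩
      simp only [Set.mem_setOf_eq, gnEx5, hnEx5] at hx
      rw [mem_ball, dist_zero_right]
      by_cases h1 : ‖x‖ ≤ 1
      · rw [if_pos h1] at hx; linarith
      · rw [if_neg h1] at hx; linarith
    · -- each point of the ball is within 1/n of the sublevel set
      intro y hy
      rw [mem_ball, dist_zero_right] at hy
      by_cases h1 : 1 < ‖y‖
      · refine ⟨y, ?_, by simp⟩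
        simp only [Set.mem_setOf_eq, gnEx5, hnEx5, if_neg (not_le.mpr h1)]
        linarith
      · push_neg at h1
        by_cases hy0 : y = 0
        · refine ⟨y, ?_, by simp⟩
          simp [Set.mem_setOf_eq, gnEx5, hnEx5, hy0, hε]
        · set r := ‖y‖ with hr
          have hr0 : 0 < r := norm_pos_iff.mpr hy0
          set k : ℕ := ⌊(n : ℝ) * r⌋₊ with hk
          have hk1 : (k : ℝ) ≤ n * r := Nat.floor_le (by positivity)
          have hk2 : (n : ℝ) * r < k + 1 := Nat.lt_floor_add_one _
          set c : ℝ := (k / n) / r with hc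
          have hc0 : 0 ≤ c := by positivity
          refine ⟨(c : ℂ) * y, ?_, ?_⟩
          · have habs : ‖(c : ℂ) * y‖ = (k : ℝ) / n := by
              rw [norm_mul, Complex.norm_real, Real.norm_eq_abs, abs_of_nonneg hc0, hc, ← hr]
              field_simp
            simp only [Set.mem_setOf_eq, gnEx5, hnEx5, habs]
            have hkn : (k : ℝ) / n ≤ 1 := by
              rw [div_le_one hn0]
              calc (k : ℝ) ≤ n * r := hk1
                _ ≤ n * 1 := by nlinarith
                _ = n := by ring
            rw [if_pos hkn]
            have : (n : ℝ) * π * ((k : ℝ) / n) = (k : ℝ) * π := by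
              field_simp
            rw [this, Real.sin_nat_mul_pi, abs_zero]
            exact hε
          · have : (c : ℂ) * y - y = ((c - 1 : ℝ) : ℂ) * y := by
              push_cast; ring
            rw [dist_comm, Complex.dist_eq, this, norm_mul, Complex.norm_real, Real.norm_eq_abs, ← hr]
            have hcr : (c - 1) * r = (k : ℝ) / n - r := by
              rw [hc]; field_simp
            have habsr : |c - 1| * r = |(c - 1) * r| := by
              rw [abs_mul, abs_of_nonneg hr0.le]
            rw [habsr, hcr, abs_le]
            constructor
            · rw [neg_le, neg_sub]
              have hrle : r ≤ ((k : ℝ) + 1) / n := by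
                rw [le_div_iff₀ hn0]; nlinarith
              have heq2 : ((k : ℝ) + 1) / n = (k : ℝ) / n + 1 / n := by ring
              linarith [heq2 ▸ hrle]
            · rw [sub_le_iff_le_add]
              calc (k : ℝ) / n ≤ r := by
                    rw [div_le_iff₀ hn0, mul_comm]; exact hk1
                _ ≤ r + 1 / n := by
                      have : (0:ℝ) < 1 / n := by positivity
                      linarith
                _ = 1 / n + r := by ring
  · rintro z hz0 hz1 _ ⟨L, hL⟩
    set r := ‖z‖ with hr
    have hLg : Tendsto (fun n : ℕ => |Real.sin (n * (π * r))|) atTop (𝓝 L) := by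
      have heq : ∀ n : ℕ, gnEx5 n z = |Real.sin (n * (π * r))| := by
        intro n
        simp only [gnEx5, hnEx5, ← hr, if_pos hz1.le]
        ring_nf
      simpa [heq] using hL
    exact no_lim_abs_sin (π * r) (by positivity) (by nlinarith [Real.pi_pos]) L hLg
end

section
/- Let A and Aₙ (n ∈ ℕ) be bounded linear operators on a Banach space X. If for every ε > 0 the pseudospectra spec_ε(Aₙ) := {λ : μ(Aₙ − λI) < ε} converge in Hausdorff distance to spec_ε(A), then the functions fₙ(λ) := μ(Aₙ − λI) converge pointwise on ℂ to f(λ) := μ(A − λI). -/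
open ContinuousLinearMap

/-- The lower norm of a bounded linear operator: `ν(A) = inf {‖Ax‖ : ‖x‖ = 1}`. -/
noncomputable def lowerNorm {E F : Type*} [NormedAddCommGroup E] [NormedSpace ℂ E]
    [NormedAddCommGroup F] [NormedSpace ℂ F] (A : E →L[ℂ] F) : ℝ :=
  sInf ((fun x => ‖A x‖) '' {x : E | ‖x‖ = 1})

/-- The Banach-space adjoint of `A`, acting on the dual space by `φ ↦ φ ∘ A`. -/
noncomputable def banachAdjoint {X : Type*} [NormedAddCommGroup X] [NormedSpace ℂ X]
    (A : X →L[ℂ] X) : StrongDual ℂ X →L[ℂ] StrongDual ℂ X :=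
  (ContinuousLinearMap.compL ℂ X X ℂ).flip A

/-- `μ(A) = min {ν(A), ν(A*)}`. -/
noncomputable def mu {X : Type*} [NormedAddCommGroup X] [NormedSpace ℂ X]
    (A : X →L[ℂ] X) : ℝ :=
  min (lowerNorm A) (lowerNorm (banachAdjoint A))

section Basic
variable {E F : Type*} [NormedAddCommGroup E] [NormedSpace ℂ E]
  [NormedAddCommGroup F] [NormedSpace ℂ F]

lemma lowerNorm_bddBelow (B : E →L[ℂ] F) :
    BddBelow ((fun x => ‖B x‖) '' {x : E | ‖x‖ = 1}) :=
  ⟨0, fun y ⟨x, _, hx⟩ => hx ▸ norm_nonneg _⟩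

lemma lowerNorm_nonneg (B : E →L[ℂ] F) : 0 ≤ lowerNorm B := by
  rcases ((fun x => ‖B x‖) '' {x : E | ‖x‖ = 1}).eq_empty_or_nonempty with h | h
  · simp [lowerNorm, h]
  · exact le_csInf h (fun y ⟨x, _, hx⟩ => hx ▸ norm_nonneg _)

lemma lowerNorm_le (B : E →L[ℂ] F) {x : E} (hx : ‖x‖ = 1) : lowerNorm B ≤ ‖B x‖ :=
  csInf_le (lowerNorm_bddBelow B) ⟨x, hx, rfl⟩

lemma le_lowerNorm (B : E →L[ℂ] F) {c : ℝ} (hne : ∃ x : E, ‖x‖ = 1)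
    (h : ∀ x : E, ‖x‖ = 1 → c ≤ ‖B x‖) : c ≤ lowerNorm B := by
  obtain ⟨x, hx⟩ := hne
  exact le_csInf ⟨_, ⟨x, hx, rfl⟩⟩ (fun y ⟨z, hz, hzy⟩ => hzy ▸ h z hz)

lemma lowerNorm_mul_norm_le (B : E →L[ℂ] F) (x : E) :
    lowerNorm B * ‖x‖ ≤ ‖B x‖ := by
  rcases eq_or_ne x 0 with rfl | hx
  · simp
  · have hn : ‖x‖ ≠ 0 := norm_ne_zero_iff.mpr hx
    have h1 : ‖(‖x‖⁻¹ : ℂ) • x‖ = 1 := by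
      rw [norm_smul]
      simp [norm_inv, inv_mul_cancel₀ hn]
    have := lowerNorm_le B h1
    rw [map_smul, norm_smul] at this
    simp only [norm_inv, Complex.norm_real, Real.norm_eq_abs, abs_norm] at this
    calc lowerNorm B * ‖x‖ ≤ (‖x‖⁻¹ * ‖B x‖) * ‖x‖ := by
          exact mul_le_mul_of_nonneg_right (by simpa using this) (norm_nonneg x)
      _ = ‖B x‖ := by field_simp

lemma lowerNorm_le_add (B C : E →L[ℂ] F) : lowerNorm B ≤ lowerNorm C + ‖B - C‖ := by
  by_cases hne : ∃ x : E, ‖x‖ = 1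
  · have key : ∀ x : E, ‖x‖ = 1 → lowerNorm B - ‖B - C‖ ≤ ‖C x‖ := by
      intro x hx
      have h1 : lowerNorm B ≤ ‖B x‖ := lowerNorm_le B hx
      have h2 : ‖B x‖ ≤ ‖C x‖ + ‖B - C‖ := by
        have : ‖B x - C x‖ ≤ ‖B - C‖ * ‖x‖ := (B - C).le_opNorm x
        rw [hx, mul_one] at this
        calc ‖B x‖ = ‖C x + (B x - C x)‖ := by congr 1; abel
          _ ≤ ‖C x‖ + ‖B x - C x‖ := norm_add_le _ _
          _ ≤ ‖C x‖ + ‖B - C‖ := by linarith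
      linarith
    have := le_lowerNorm C hne key
    linarith
  · have hempty : {x : E | ‖x‖ = 1} = ∅ := by
      ext x; simp only [Set.mem_setOf_eq, Set.mem_empty_iff_false, iff_false]
      exact fun hx => hne ⟨x, hx⟩
    have hB : lowerNorm B = 0 := by simp [lowerNorm, hempty]
    have hC : lowerNorm C = 0 := by simp [lowerNorm, hempty]
    rw [hB, hC, zero_add]; exact norm_nonneg _

end Basic

section Adjoint
variable {X : Type*} [NormedAddCommGroup X] [NormedSpace ℂ X]

lemma banachAdjoint_apply (A : X →L[ℂ] X) (φ : StrongDual ℂ X) :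
    banachAdjoint A φ = φ.comp A := rfl

lemma banachAdjoint_sub (A B : X →L[ℂ] X) :
    banachAdjoint (A - B) = banachAdjoint A - banachAdjoint B :=
  map_sub ((ContinuousLinearMap.compL ℂ X X ℂ).flip) A B

lemma banachAdjoint_norm_le (A : X →L[ℂ] X) : ‖banachAdjoint A‖ ≤ ‖A‖ := by
  refine ContinuousLinearMap.opNorm_le_bound _ (norm_nonneg A) (fun φ => ?_)
  rw [banachAdjoint_apply, mul_comm]
  exact ContinuousLinearMap.opNorm_comp_le φ A

lemma banachAdjoint_one : banachAdjoint (1 : X →L[ℂ] X) = 1 := by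
  ext φ x; rfl

set_option synthInstance.maxHeartbeats 1000000 in
lemma banachAdjoint_smul_one (c : ℂ) :
    banachAdjoint (c • (1 : X →L[ℂ] X)) = c • 1 := by
  ext φ x
  simp [banachAdjoint_apply]

lemma mu_nonneg (B : X →L[ℂ] X) : 0 ≤ mu B :=
  le_min (lowerNorm_nonneg _) (lowerNorm_nonneg _)

lemma mu_le_add (B C : X →L[ℂ] X) : mu B ≤ mu C + ‖B - C‖ := by
  have h1 : lowerNorm B ≤ lowerNorm C + ‖B - C‖ := lowerNorm_le_add B C
  have h2 : lowerNorm (banachAdjoint B) ≤ lowerNorm (banachAdjoint C) + ‖B - C‖ := by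
    have := lowerNorm_le_add (banachAdjoint B) (banachAdjoint C)
    have hn : ‖banachAdjoint B - banachAdjoint C‖ ≤ ‖B - C‖ := by
      rw [← banachAdjoint_sub]; exact banachAdjoint_norm_le _
    linarith
  rcases min_cases (lowerNorm C) (lowerNorm (banachAdjoint C)) with ⟨h, _⟩ | ⟨h, _⟩ <;>
    simp only [mu, h] <;>
    [exact le_trans (min_le_left _ _) h1; exact le_trans (min_le_right _ _) h2]

end Adjoint

section Nontrivial
variable {X : Type*} [NormedAddCommGroup X] [NormedSpace ℂ X]

lemma exists_norm_one (Y : Type*) [NormedAddCommGroup Y] [NormedSpace ℂ Y] [Nontrivial Y] :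
    ∃ x : Y, ‖x‖ = 1 :=
  exists_norm_eq Y zero_le_one

lemma dual_nontrivial [Nontrivial X] : Nontrivial (StrongDual ℂ X) := by
  obtain ⟨x, hx⟩ := exists_ne (0 : X)
  obtain ⟨g, hg, -⟩ := exists_dual_vector ℂ x (norm_ne_zero_iff.mpr hx)
  exact ⟨g, 0, fun h => by simp [h] at hg⟩

lemma lowerNorm_smul_one (Y : Type*) [NormedAddCommGroup Y] [NormedSpace ℂ Y] [Nontrivial Y]
    (c : ℂ) : lowerNorm (c • (1 : Y →L[ℂ] Y)) = ‖c‖ := by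
  refine le_antisymm ?_ ?_
  · obtain ⟨x, hx⟩ := exists_norm_one Y
    have := lowerNorm_le (c • (1 : Y →L[ℂ] Y)) hx
    simpa [norm_smul, hx] using this
  · refine le_lowerNorm _ (exists_norm_one Y) (fun x hx => ?_)
    simp [norm_smul, hx]

lemma mu_smul_one [Nontrivial X] (c : ℂ) : mu (c • (1 : X →L[ℂ] X)) = ‖c‖ := by
  have := dual_nontrivial (X := X)
  rw [mu, banachAdjoint_smul_one, lowerNorm_smul_one, lowerNorm_smul_one, min_self]

lemma growth [Nontrivial X] (B : X →L[ℂ] X) (lam : ℂ) :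
    ‖lam‖ - ‖B‖ ≤ mu (B - lam • 1) := by
  have h := mu_le_add (-lam • (1 : X →L[ℂ] X)) (B - lam • 1)
  have he : (-lam • (1 : X →L[ℂ] X)) - (B - lam • 1) = -B := by
    rw [neg_smul]; abel
  rw [he, norm_neg, mu_smul_one, norm_neg] at h
  linarith

lemma norm_smul_one_le (c : ℂ) : ‖c • (1 : X →L[ℂ] X)‖ ≤ ‖c‖ := by
  calc ‖c • (1 : X →L[ℂ] X)‖ ≤ ‖c‖ * ‖(1 : X →L[ℂ] X)‖ := norm_smul_le c (1 : X →L[ℂ] X)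
    _ ≤ ‖c‖ * 1 :=
        mul_le_mul_of_nonneg_left ContinuousLinearMap.norm_id_le (norm_nonneg c)
    _ = ‖c‖ := mul_one _

end Nontrivial

section Unit
variable {X : Type*} [NormedAddCommGroup X] [NormedSpace ℂ X] [CompleteSpace X]

lemma isUnit_of_mu_pos {B : X →L[ℂ] X} (h : 0 < mu B) : IsUnit B := by
  have h1 : 0 < lowerNorm B := lt_of_lt_of_le h (min_le_left _ _)
  have h2 : 0 < lowerNorm (banachAdjoint B) := lt_of_lt_of_le h (min_le_right _ _)
  rw [ContinuousLinearMap.isUnit_iff_bijective,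
    ContinuousLinearMap.bijective_iff_dense_range_and_antilipschitz]
  constructor
  · -- dense range
    by_contra hne
    set p := (LinearMap.range (B : X →ₗ[ℂ] X)).topologicalClosure with hp
    have hcl : IsClosed (p : Set X) := Submodule.isClosed_topologicalClosure _
    obtain ⟨x, hx⟩ : ∃ x : X, x ∉ p := by
      by_contra hall
      push_neg at hall
      exact hne (Submodule.eq_top_iff'.mpr hall)
    haveI : IsClosed (p : Set X) := hcl
    -- quotient map as CLM
    let q : X →L[ℂ] X ⧸ p :=
      LinearMap.mkContinuous p.mkQ 1 (fun y => by
        simpa using Submodule.Quotient.norm_mk_le p y)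
    have hxq : (Submodule.Quotient.mk x : X ⧸ p) ≠ 0 := by
      rw [Ne, Submodule.Quotient.mk_eq_zero]
      exact hx
    obtain ⟨g, hg1, hg2⟩ := exists_dual_vector ℂ (Submodule.Quotient.mk x : X ⧸ p) (norm_ne_zero_iff.mpr hxq)
    set φ : StrongDual ℂ X := g.comp q with hφ
    have hφx : φ x = ‖(Submodule.Quotient.mk x : X ⧸ p)‖ := hg2
    have hφne : φ ≠ 0 := by
      intro h0
      rw [h0] at hφx
      have : ‖(Submodule.Quotient.mk x : X ⧸ p)‖ ≠ 0 := norm_ne_zero_iff.mpr hxq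
      apply this
      have : ((0 : StrongDual ℂ X)) x = 0 := rfl
      rw [this] at hφx
      exact_mod_cast hφx.symm
    have hvan : banachAdjoint B φ = 0 := by
      ext y
      have hy : B y ∈ p := (LinearMap.range (B : X →ₗ[ℂ] X)).le_topologicalClosure ⟨y, rfl⟩
      have : (Submodule.Quotient.mk (B y) : X ⧸ p) = 0 :=
        (Submodule.Quotient.mk_eq_zero _).mpr hy
      show g (q (B y)) = (0 : StrongDual ℂ X) y
      have hq : q (B y) = Submodule.Quotient.mk (B y) := rfl
      rw [hq, this, map_zero]
      rfl
    have := lowerNorm_mul_norm_le (banachAdjoint B) φ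
    rw [hvan, norm_zero] at this
    have hφn : 0 < ‖φ‖ := norm_pos_iff.mpr hφne
    nlinarith
  · -- antilipschitz
    refine ⟨⟨(lowerNorm B)⁻¹, inv_nonneg.mpr h1.le⟩, B.antilipschitz_of_bound (fun x => ?_)⟩
    have := lowerNorm_mul_norm_le B x
    change ‖x‖ ≤ (lowerNorm B)⁻¹ * ‖B x‖
    rw [← div_eq_inv_mul, le_div_iff₀ h1, mul_comm]
    exact this

end Unit

section Spectrum
variable {X : Type*} [NormedAddCommGroup X] [NormedSpace ℂ X] [CompleteSpace X]

lemma mu_eq_zero_of_mem_spectrum {B : X →L[ℂ] X} {lam : ℂ}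
    (h : lam ∈ spectrum ℂ B) : mu (B - lam • 1) = 0 := by
  by_contra hne
  have hpos : 0 < mu (B - lam • 1) := lt_of_le_of_ne (mu_nonneg _) (Ne.symm hne)
  have hu : IsUnit (B - lam • 1) := isUnit_of_mu_pos hpos
  have hu' : IsUnit (algebraMap ℂ (X →L[ℂ] X) lam - B) := by
    have : algebraMap ℂ (X →L[ℂ] X) lam - B = -(B - lam • 1) := by
      rw [Algebra.algebraMap_eq_smul_one]; abel
    rw [this]
    exact hu.neg
  exact (spectrum.mem_iff.mp h) hu'

lemma pseudospectrum_nonempty [Nontrivial X] (B : X →L[ℂ] X) {ε : ℝ} (hε : 0 < ε) :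
    {lam : ℂ | mu (B - lam • (1 : X →L[ℂ] X)) < ε}.Nonempty := by
  obtain ⟨lam, hlam⟩ := spectrum.nonempty B
  exact ⟨lam, by simp [Set.mem_setOf_eq, mu_eq_zero_of_mem_spectrum hlam, hε]⟩

lemma pseudospectrum_bounded [Nontrivial X] (B : X →L[ℂ] X) (ε : ℝ) :
    Bornology.IsBounded {lam : ℂ | mu (B - lam • (1 : X →L[ℂ] X)) < ε} := by
  apply (Metric.isBounded_ball (x := (0 : ℂ)) (r := ‖B‖ + ε)).subset
  intro lam hlam
  simp only [Set.mem_setOf_eq] at hlam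
  have := growth B lam
  simp only [Metric.mem_ball, dist_zero_right]
  have : ‖lam‖ - ‖B‖ < ε := lt_of_le_of_lt this hlam
  linarith

end Spectrum


open Filter Topology Metric in
/-- If all pseudospectra converge in Hausdorff distance, then the spectral
quantities `fₙ(λ) = μ(Aₙ - λ)` converge pointwise to `f(λ) = μ(A - λ)`. -/
theorem pointwise_of_pseudospectra_hausdorff {X : Type*} [NormedAddCommGroup X]
    [NormedSpace ℂ X] [CompleteSpace X]
    (A : X →L[ℂ] X) (As : ℕ → X →L[ℂ] X)
    (hH : ∀ ε : ℝ, 0 < ε →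
      Tendsto (fun n => hausdorffDist
          {lam : ℂ | mu (As n - lam • (1 : X →L[ℂ] X)) < ε}
          {lam : ℂ | mu (A - lam • (1 : X →L[ℂ] X)) < ε})
        atTop (𝓝 0)) :
    ∀ lam : ℂ, Tendsto (fun n => mu (As n - lam • (1 : X →L[ℂ] X)))
      atTop (𝓝 (mu (A - lam • (1 : X →L[ℂ] X)))) := by
  intro lam
  rcases subsingleton_or_nontrivial X with hX | hX
  · -- trivial space : everything is zero
    have hzero : ∀ B : X →L[ℂ] X, mu B = 0 := by
      intro B
      have h1 : {x : X | ‖x‖ = 1} = ∅ := by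
        ext x
        simp only [Set.mem_setOf_eq, Set.mem_empty_iff_false, iff_false]
        intro hx
        rw [Subsingleton.elim x 0, norm_zero] at hx
        norm_num at hx
      have h2 : {φ : StrongDual ℂ X | ‖φ‖ = 1} = ∅ := by
        ext φ
        simp only [Set.mem_setOf_eq, Set.mem_empty_iff_false, iff_false]
        intro hφ
        have : φ = 0 := by
          ext x
          rw [Subsingleton.elim x 0, map_zero]
          rfl
        rw [this, norm_zero] at hφ
        norm_num at hφ
      simp [mu, lowerNorm, h1, h2, Real.sInf_empty]
    simp only [hzero]
    exact tendsto_const_nhds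
  · -- nontrivial space
    set f : ℂ → ℝ := fun z => mu (A - z • (1 : X →L[ℂ] X)) with hf
    set fn : ℕ → ℂ → ℝ := fun n z => mu (As n - z • (1 : X →L[ℂ] X)) with hfn
    set t := f lam with ht
    have htnn : 0 ≤ t := mu_nonneg _
    -- Lipschitz-type estimates
    have lipf : ∀ z w : ℂ, f z ≤ f w + ‖z - w‖ := by
      intro z w
      have := mu_le_add (A - z • (1 : X →L[ℂ] X)) (A - w • (1 : X →L[ℂ] X))
      have he : (A - z • (1 : X →L[ℂ] X)) - (A - w • (1 : X →L[ℂ] X))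
          = (w - z) • (1 : X →L[ℂ] X) := by
        rw [sub_smul]; abel
      rw [he] at this
      have := le_trans this (add_le_add le_rfl (norm_smul_one_le (w - z)))
      rw [show ‖w - z‖ = ‖z - w‖ from norm_sub_rev w z] at this
      exact this
    have lipfn : ∀ n, ∀ z w : ℂ, fn n z ≤ fn n w + ‖z - w‖ := by
      intro n z w
      have := mu_le_add (As n - z • (1 : X →L[ℂ] X)) (As n - w • (1 : X →L[ℂ] X))
      have he : (As n - z • (1 : X →L[ℂ] X)) - (As n - w • (1 : X →L[ℂ] X))
          = (w - z) • (1 : X →L[ℂ] X) := by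
        rw [sub_smul]; abel
      rw [he] at this
      have := le_trans this (add_le_add le_rfl (norm_smul_one_le (w - z)))
      rw [show ‖w - z‖ = ‖z - w‖ from norm_sub_rev w z] at this
      exact this
    rw [Metric.tendsto_nhds]
    intro δ hδ
    -- upper bound
    have hub : ∀ᶠ n in atTop, fn n lam < t + δ := by
      have hε₁ : (0:ℝ) < t + δ/2 := by linarith
      have hev := (hH (t + δ/2) hε₁).eventually_lt_const (show (0:ℝ) < δ/4 by linarith)
      filter_upwards [hev] with n hn
      have fin : EMetric.hausdorffEdist
          {z : ℂ | mu (As n - z • (1 : X →L[ℂ] X)) < t + δ/2}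
          {z : ℂ | mu (A - z • (1 : X →L[ℂ] X)) < t + δ/2} ≠ ⊤ :=
        Metric.hausdorffEdist_ne_top_of_nonempty_of_bounded
          (pseudospectrum_nonempty _ hε₁) (pseudospectrum_nonempty _ hε₁)
          (pseudospectrum_bounded _ _) (pseudospectrum_bounded _ _)
      have hmem : lam ∈ {z : ℂ | mu (A - z • (1 : X →L[ℂ] X)) < t + δ/2} := by
        simp only [Set.mem_setOf_eq]; linarith
      obtain ⟨y, hy, hdy⟩ := Metric.exists_dist_lt_of_hausdorffDist_lt' hmem hn fin
      have : fn n lam ≤ fn n y + ‖lam - y‖ := lipfn n lam y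
      simp only [Set.mem_setOf_eq] at hy
      have hd : ‖lam - y‖ < δ/4 := by
        rw [show ‖lam - y‖ = dist lam y from (dist_eq_norm lam y).symm, dist_comm]
        exact hdy
      calc fn n lam ≤ fn n y + ‖lam - y‖ := this
        _ < (t + δ/2) + δ/4 := by exact add_lt_add hy hd
        _ < t + δ := by linarith
    -- lower bound
    have hlb : ∀ᶠ n in atTop, t - δ < fn n lam := by
      by_cases ht2 : t ≤ δ/2
      · filter_upwards with n
        have := mu_nonneg (As n - lam • (1 : X →L[ℂ] X))
        have : (0:ℝ) ≤ fn n lam := this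
        linarith
      · push_neg at ht2
        have hε₂ : (0:ℝ) < t - δ/2 := by linarith
        have hev := (hH (t - δ/2) hε₂).eventually_lt_const (show (0:ℝ) < δ/4 by linarith)
        filter_upwards [hev] with n hn
        by_contra hcon
        push_neg at hcon
        have hmem : lam ∈ {z : ℂ | mu (As n - z • (1 : X →L[ℂ] X)) < t - δ/2} := by
          simp only [Set.mem_setOf_eq]
          calc mu (As n - lam • (1 : X →L[ℂ] X)) = fn n lam := rfl
            _ ≤ t - δ := hcon
            _ < t - δ/2 := by linarith
        have fin : EMetric.hausdorffEdist
            {z : ℂ | mu (As n - z • (1 : X →L[ℂ] X)) < t - δ/2}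
            {z : ℂ | mu (A - z • (1 : X →L[ℂ] X)) < t - δ/2} ≠ ⊤ :=
          Metric.hausdorffEdist_ne_top_of_nonempty_of_bounded
            (pseudospectrum_nonempty _ hε₂) (pseudospectrum_nonempty _ hε₂)
            (pseudospectrum_bounded _ _) (pseudospectrum_bounded _ _)
        obtain ⟨y, hy, hdy⟩ := Metric.exists_dist_lt_of_hausdorffDist_lt hmem hn fin
        simp only [Set.mem_setOf_eq] at hy
        have : f lam ≤ f y + ‖lam - y‖ := lipf lam y
        have hd : ‖lam - y‖ < δ/4 := by
          rw [show ‖lam - y‖ = dist lam y from (dist_eq_norm lam y).symm]; exact hdy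
        have : t < t := by
          calc t = f lam := rfl
            _ ≤ f y + ‖lam - y‖ := this
            _ < (t - δ/2) + δ/4 := add_lt_add hy hd
            _ < t := by linarith
        exact lt_irrefl _ this
    filter_upwards [hub, hlb] with n h1 h2
    rw [Real.dist_eq, abs_sub_lt_iff]
    constructor <;> linarith
end
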